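/- Let n be an odd positive integer having no divisor congruent to 3 modulo 4, and suppose there exist divisors δ and d of n such that δ + d has a divisor m with m ≡ 3 (mod 4). Then there exist pairwise distinct positive integers x₁, x₂, x₃ such that 4/n = 1/x₁ + 1/x₂ + 1/x₃. -/

import Mathlib

theorem stmt_13 (n : ℕ) (hn : 0 < n) (hodd : Odd n)
    (hnodiv : ∀ m : ℕ, m ∣ n → m % 4 ≠ 3)
    (h : ∃ δ d : ℕ, δ ∣ n ∧ d ∣ n ∧ ∃ m : ℕ, m % 4 = 3 ∧ m ∣ δ + d) :
    ∃ x₁ x₂ x₃ : ℕ, 0 < x₁ ∧ 0 < x₂ ∧ 0 < x₃ ∧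
      x₁ ≠ x₂ ∧ x₂ ≠ x₃ ∧ x₁ ≠ x₃ ∧
      (4 : ℚ) / n = 1 / x₁ + 1 / x₂ + 1 / x₃ := by
  obtain ⟨δ, d, hδ, hd, m, hm4, hmd⟩ := h
  have hδpos : 0 < δ := Nat.pos_of_dvd_of_pos hδ hn
  have hdpos : 0 < d := Nat.pos_of_dvd_of_pos hd hn
  have div1 : ∀ e : ℕ, e ∣ n → e % 4 = 1 := by
    intro e he
    have h3 := hnodiv e he
    obtain ⟨c, hc⟩ := he
    have hoe : Odd e := (Nat.odd_mul.mp (hc ▸ hodd)).1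
    have := Nat.odd_iff.mp hoe
    omega
  have hδ4 : δ % 4 = 1 := div1 δ hδ
  have hd4 : d % 4 = 1 := div1 d hd
  have hmodd : m % 2 = 1 := by omega
  have hne : δ ≠ d := by
    intro hEq
    subst hEq
    have h2 : m ∣ δ * 2 := by
      have : δ + δ = δ * 2 := by ring
      rwa [this] at hmd
    have hcop : Nat.Coprime m 2 := by
      exact Nat.coprime_two_right.mpr (Nat.odd_iff.mpr hmodd)
    have : m ∣ δ := hcop.dvd_of_dvd_mul_right h2
    exact hnodiv m (this.trans hδ) hm4
  -- key quantities
  set a := n / δ with ha_def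
  set b := n / d with hb_def
  set t := (δ + d) / m with ht_def
  set q := (m + 1) / 4 with hq_def
  have ha : δ * a = n := Nat.mul_div_cancel' hδ
  have hb : d * b = n := Nat.mul_div_cancel' hd
  have ht : m * t = δ + d := Nat.mul_div_cancel' hmd
  have hq : 4 * q = m + 1 := Nat.mul_div_cancel' (by omega : 4 ∣ m + 1)
  have hapos : 0 < a := by
    rcases Nat.eq_zero_or_pos a with h0 | h0
    · rw [h0, Nat.mul_zero] at ha; omega
    · exact h0
  have hbpos : 0 < b := by
    rcases Nat.eq_zero_or_pos b with h0 | h0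
    · rw [h0, Nat.mul_zero] at hb; omega
    · exact h0
  have htpos : 0 < t := by
    rcases Nat.eq_zero_or_pos t with h0 | h0
    · rw [h0, Nat.mul_zero] at ht; omega
    · exact h0
  have hqpos : 0 < q := by omega
  refine ⟨q * t * a, q * t * b, q * n, by positivity, by positivity, by positivity,
    ?_, ?_, ?_, ?_⟩
  · -- x₁ ≠ x₂
    intro hEq
    have hab : a = b := Nat.eq_of_mul_eq_mul_left (by positivity) hEq
    apply hne
    have : δ * a = d * a := by rw [ha, hab, hb]
    exact Nat.eq_of_mul_eq_mul_right hapos this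
  · -- x₂ ≠ x₃
    intro hEq
    have h1 : t * b = n := Nat.eq_of_mul_eq_mul_left hqpos (by rw [← mul_assoc]; exact hEq)
    have h2 : t * b = d * b := by rw [h1, hb]
    have h3 : t = d := Nat.eq_of_mul_eq_mul_right hbpos h2
    have h4 : (m * d) % 4 = 3 := by rw [Nat.mul_mod, hm4, hd4]
    rw [h3] at ht
    omega
  · -- x₁ ≠ x₃
    intro hEq
    have h1 : t * a = n := Nat.eq_of_mul_eq_mul_left hqpos (by rw [← mul_assoc]; exact hEq)
    have h2 : t * a = δ * a := by rw [h1, ha]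
    have h3 : t = δ := Nat.eq_of_mul_eq_mul_right hapos h2
    have h4 : (m * δ) % 4 = 3 := by rw [Nat.mul_mod, hm4, hδ4]
    rw [h3] at ht
    omega
  · -- the identity over ℚ
    have ha' : (δ : ℚ) * a = n := by exact_mod_cast congrArg (Nat.cast : ℕ → ℚ) ha
    have hb' : (d : ℚ) * b = n := by exact_mod_cast congrArg (Nat.cast : ℕ → ℚ) hb
    have ht' : (m : ℚ) * t = δ + d := by exact_mod_cast congrArg (Nat.cast : ℕ → ℚ) ht
    have hq' : (4 : ℚ) * q = m + 1 := by exact_mod_cast congrArg (Nat.cast : ℕ → ℚ) hq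
    have hn0 : (n : ℚ) ≠ 0 := Nat.cast_ne_zero.mpr hn.ne'
    have hq0 : (q : ℚ) ≠ 0 := Nat.cast_ne_zero.mpr hqpos.ne'
    have ht0 : (t : ℚ) ≠ 0 := Nat.cast_ne_zero.mpr htpos.ne'
    have ha0 : (a : ℚ) ≠ 0 := Nat.cast_ne_zero.mpr hapos.ne'
    have hb0 : (b : ℚ) ≠ 0 := Nat.cast_ne_zero.mpr hbpos.ne'
    push_cast
    have hqtn : (q : ℚ) * t * n ≠ 0 := mul_ne_zero (mul_ne_zero hq0 ht0) hn0
    have h1 : (1 : ℚ) / ((q : ℚ) * t * a) = (δ : ℚ) / ((q : ℚ) * t * n) := by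
      rw [div_eq_div_iff (mul_ne_zero (mul_ne_zero hq0 ht0) ha0) hqtn]
      linear_combination (-(q : ℚ) * t) * ha'
    have h2 : (1 : ℚ) / ((q : ℚ) * t * b) = (d : ℚ) / ((q : ℚ) * t * n) := by
      rw [div_eq_div_iff (mul_ne_zero (mul_ne_zero hq0 ht0) hb0) hqtn]
      linear_combination (-(q : ℚ) * t) * hb'
    have h3 : (1 : ℚ) / ((q : ℚ) * n) = (t : ℚ) / ((q : ℚ) * t * n) := by
      rw [div_eq_div_iff (mul_ne_zero hq0 hn0) hqtn]
      ring
    rw [h1, h2, h3, ← add_div, ← add_div, div_eq_div_iff hn0 hqtn]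
    linear_combination ((n : ℚ) * t) * hq' + (n : ℚ) * ht'
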